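/- Let P be the uniform distribution on [a,b] with a < b, and let β = {b}. For every n ∈ ℕ with n ≥ 1, the n-th conditional unconstrained quantization error for P with respect to β equals (b−a)²/(3(2n−1)²), and this infimum is attained by the set {a + (2j−1)(b−a)/(2n−1) : 1 ≤ j ≤ n}. -/

import Mathlib

open MeasureTheory Set Filter

/-- The uniform distribution on `[a, b]`: normalized Lebesgue measure restricted to `[a, b]`. -/
noncomputable def uniformOn (a b : ℝ) : Measure ℝ :=
  (ENNReal.ofReal (b - a))⁻¹ • volume.restrict (Set.Icc a b)

/-- The distortion error of a set `s` of points for the measure `P`. -/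
noncomputable def distortion (P : Measure ℝ) (s : Set ℝ) : ℝ :=
  ∫ x, sInf ((fun a => (x - a) ^ 2) '' s) ∂P

/-- The `n`-th conditional (unconstrained) quantization error for `P` with respect to
the conditional set `β`. -/
noncomputable def condQuantError (P : Measure ℝ) (β : Set ℝ) (n : ℕ) : ℝ :=
  sInf { v : ℝ | ∃ α : Set ℝ, α.Finite ∧ α.ncard ≤ n - β.ncard ∧ v = distortion P (α ∪ β) }

noncomputable def nf (s : Set ℝ) (x : ℝ) : ℝ := sInf ((fun a => (x - a) ^ 2) '' s)

lemma nf_le {s : Set ℝ} (hs : s.Finite) {c : ℝ} (hc : c ∈ s) (x : ℝ) :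
    nf s x ≤ (x - c) ^ 2 :=
  csInf_le (hs.image _).bddBelow ⟨c, hc, rfl⟩

lemma nf_mem {s : Set ℝ} (hs : s.Finite) (hne : s.Nonempty) (x : ℝ) :
    ∃ c ∈ s, nf s x = (x - c) ^ 2 := by
  obtain ⟨c, hc, h⟩ := (hne.image (fun a => (x - a) ^ 2)).csInf_mem (hs.image _)
  exact ⟨c, hc, h.symm⟩

lemma nf_nonneg {s : Set ℝ} (hs : s.Finite) (hne : s.Nonempty) (x : ℝ) : 0 ≤ nf s x := by
  obtain ⟨c, _, h⟩ := nf_mem hs hne x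
  rw [h]; positivity

lemma nf_continuous {s : Set ℝ} (hs : s.Finite) (hne : s.Nonempty) : Continuous (nf s) := by
  have : nf s = fun x => hs.toFinset.inf' (by simpa using hne) (fun c => (x - c) ^ 2) := by
    funext x
    rw [Finset.inf'_eq_csInf_image, nf]
    congr 1
    simp
  rw [this]
  rw [continuous_iff_continuousAt]
  intro x
  exact ContinuousAt.finset_inf'_apply (by simpa using hne)
    (fun i _ => (by fun_prop : Continuous fun y : ℝ => (y - i)^2).continuousAt)

lemma distortion_eq (a b : ℝ) (hab : a < b) (s : Set ℝ) :
    distortion (uniformOn a b) s = (b - a)⁻¹ * ∫ x in a..b, nf s x := by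
  have h0 : (0:ℝ) < b - a := by linarith
  unfold distortion uniformOn
  rw [integral_smul_measure, ENNReal.toReal_inv, ENNReal.toReal_ofReal h0.le,
    smul_eq_mul, intervalIntegral.integral_of_le hab.le,
    ← integral_Icc_eq_integral_Ioc]
  rfl
-- measure covering bound
lemma meas_bound (a b : ℝ) (hab : a < b) (n : ℕ) (hn : 1 ≤ n) (γ : Set ℝ) (hγ : γ.Finite)
    (hb : b ∈ γ) (hcard : γ.ncard ≤ n) {t : ℝ} (ht : 0 < t) :
    ENNReal.ofReal ((b - a) - (2 * n - 1) * Real.sqrt t)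
      ≤ volume ({x | t < nf γ x} ∩ Icc a b) := by
  set r := Real.sqrt t with hr
  have hr0 : 0 ≤ r := Real.sqrt_nonneg t
  have hmr : 0 ≤ (2 * (n:ℝ) - 1) * r := by
    have h1 : (1:ℝ) ≤ n := by exact_mod_cast hn
    apply mul_nonneg (by linarith) hr0
  rw [ENNReal.ofReal_sub _ hmr]
  rw [tsub_le_iff_right]
  have hIcc : volume (Icc a b) = ENNReal.ofReal (b - a) := by
    rw [Real.volume_Icc]
  calc ENNReal.ofReal (b - a) = volume (Icc a b) := hIcc.symm
    _ ≤ volume (({x | t < nf γ x} ∩ Icc a b) ∪ ({x | nf γ x ≤ t} ∩ Icc a b)) := by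
        apply measure_mono
        intro x hx
        rcases lt_or_ge t (nf γ x) with h | h
        · exact Or.inl ⟨h, hx⟩
        · exact Or.inr ⟨h, hx⟩
    _ ≤ volume ({x | t < nf γ x} ∩ Icc a b) + volume ({x | nf γ x ≤ t} ∩ Icc a b) :=
        measure_union_le _ _
    _ ≤ volume ({x | t < nf γ x} ∩ Icc a b) + ENNReal.ofReal ((2 * n - 1) * r) := by
        gcongr
        -- covering bound
        have hsub : {x | nf γ x ≤ t} ∩ Icc a b ⊆
            ⋃ c ∈ hγ.toFinset, Icc (c - r) (c + r) ∩ Icc a b := by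
          rintro x ⟨hx, hxI⟩
          obtain ⟨c, hc, hEq⟩ := nf_mem hγ ⟨b, hb⟩ x
          have h1 : (x - c)^2 ≤ t := hEq ▸ hx
          have h2 : |x - c| ≤ r := by
            rw [hr]
            rw [← Real.sqrt_sq_eq_abs]
            exact Real.sqrt_le_sqrt (by nlinarith)
          rw [abs_le] at h2
          refine mem_biUnion (hγ.mem_toFinset.mpr hc) ⟨⟨by linarith, by linarith⟩, hxI⟩
        refine (measure_mono hsub).trans ?_
        refine (measure_biUnion_finset_le _ _).trans ?_
        -- split off b
        have hbF : b ∈ hγ.toFinset := hγ.mem_toFinset.mpr hb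
        rw [← Finset.add_sum_erase _ _ hbF]
        have hterm : ∀ c : ℝ, volume (Icc (c - r) (c + r) ∩ Icc a b) ≤ ENNReal.ofReal (2 * r) := by
          intro c
          refine (measure_mono (inter_subset_left)).trans ?_
          rw [Real.volume_Icc]
          exact ENNReal.ofReal_le_ofReal (by linarith)
        have hbterm : volume (Icc (b - r) (b + r) ∩ Icc a b) ≤ ENNReal.ofReal r := by
          have hss : Icc (b - r) (b + r) ∩ Icc a b ⊆ Icc (b - r) b :=
            fun x hx => ⟨hx.1.1, hx.2.2⟩
          refine (measure_mono hss).trans ?_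
          rw [Real.volume_Icc]
          exact ENNReal.ofReal_le_ofReal (by linarith)
        have hcard' : ((hγ.toFinset.erase b).card : ℝ) ≤ (n : ℝ) - 1 := by
          have h1 : (hγ.toFinset.erase b).card = hγ.toFinset.card - 1 :=
            Finset.card_erase_of_mem hbF
          have h2 : hγ.toFinset.card = γ.ncard := (Set.ncard_eq_toFinset_card _ hγ).symm
          have h3 : 1 ≤ hγ.toFinset.card := Finset.card_pos.mpr ⟨b, hbF⟩
          have : ((hγ.toFinset.erase b).card : ℕ) ≤ n - 1 := by omega
          have hn1 : ((n:ℕ):ℝ) - 1 = ((n - 1 : ℕ) : ℝ) := by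
            have : (1:ℕ) ≤ n := hn
            push_cast [Nat.cast_sub this]
            ring
          rw [hn1]
          exact_mod_cast this
        calc volume (Icc (b - r) (b + r) ∩ Icc a b)
              + ∑ c ∈ hγ.toFinset.erase b, volume (Icc (c - r) (c + r) ∩ Icc a b)
            ≤ ENNReal.ofReal r + ∑ c ∈ hγ.toFinset.erase b, ENNReal.ofReal (2 * r) := by
              exact add_le_add hbterm (Finset.sum_le_sum fun c _ => hterm c)
          _ = ENNReal.ofReal r + (hγ.toFinset.erase b).card • ENNReal.ofReal (2 * r) := by
              rw [Finset.sum_const]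
          _ ≤ ENNReal.ofReal ((2 * n - 1) * r) := by
              rw [nsmul_eq_mul, ← ENNReal.ofReal_natCast, ← ENNReal.ofReal_mul (by positivity),
                ← ENNReal.ofReal_add hr0 (by positivity)]
              apply ENNReal.ofReal_le_ofReal
              nlinarith [hcard']
lemma integral_lower (a b : ℝ) (hab : a < b) (n : ℕ) (hn : 1 ≤ n) (γ : Set ℝ) (hγ : γ.Finite)
    (hb : b ∈ γ) (hcard : γ.ncard ≤ n) :
    (b - a) ^ 3 / (3 * (2 * (n:ℝ) - 1) ^ 2) ≤ ∫ x in Icc a b, nf γ x := by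
  have hne : γ.Nonempty := ⟨b, hb⟩
  set L := b - a with hL
  have hL0 : (0:ℝ) < L := by simp [hL]; linarith
  set m : ℝ := 2 * (n:ℝ) - 1 with hm
  have hm0 : (0:ℝ) < m := by
    have : (1:ℝ) ≤ n := by exact_mod_cast hn
    simp only [hm]; linarith
  set T : ℝ := (L / m) ^ 2 with hT
  have hT0 : (0:ℝ) < T := by positivity
  have hcont := nf_continuous hγ hne
  have hint : IntegrableOn (nf γ) (Icc a b) volume := hcont.integrableOn_Icc
  have hnn : 0 ≤ᵐ[volume.restrict (Icc a b)] nf γ :=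
    Eventually.of_forall (nf_nonneg hγ hne)
  -- layer cake
  have key1 : ENNReal.ofReal (∫ x in Icc a b, nf γ x)
      = ∫⁻ t in Ioi (0:ℝ), volume.restrict (Icc a b) {x | t < nf γ x} := by
    rw [ofReal_integral_eq_lintegral_ofReal hint hnn]
    exact lintegral_eq_lintegral_meas_lt _ hnn hcont.aemeasurable.restrict
  have hmeas : ∀ t : ℝ, volume.restrict (Icc a b) {x | t < nf γ x}
      = volume ({x | t < nf γ x} ∩ Icc a b) := by
    intro t
    rw [Measure.restrict_apply]
    exact measurableSet_lt measurable_const hcont.measurable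
  -- lower bound the RHS
  have key2 : ∫⁻ t in Ioc (0:ℝ) T, ENNReal.ofReal (L - m * Real.sqrt t)
      ≤ ∫⁻ t in Ioi (0:ℝ), volume.restrict (Icc a b) {x | t < nf γ x} := by
    refine le_trans ?_ (lintegral_mono_set (Ioc_subset_Ioi_self : Ioc (0:ℝ) T ⊆ Ioi 0))
    refine setLIntegral_mono_ae' measurableSet_Ioc ?_
    refine Eventually.of_forall fun t ht => ?_
    rw [hmeas t]
    exact meas_bound a b hab n hn γ hγ hb hcard ht.1
  -- compute the lower integral
  have hsq_int : IntegrableOn (fun t : ℝ => L - m * Real.sqrt t) (Ioc 0 T) volume :=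
    ((continuous_const.sub (continuous_const.mul Real.continuous_sqrt)).integrableOn_Icc).mono_set
      Ioc_subset_Icc_self
  have hsq_nn : 0 ≤ᵐ[volume.restrict (Ioc (0:ℝ) T)] fun t : ℝ => L - m * Real.sqrt t := by
    show ∀ᵐ t ∂(volume.restrict (Ioc (0:ℝ) T)), 0 ≤ L - m * Real.sqrt t
    rw [ae_restrict_iff' measurableSet_Ioc]
    refine Eventually.of_forall fun t ht => ?_
    have h1 : Real.sqrt t ≤ Real.sqrt T := Real.sqrt_le_sqrt ht.2
    have h2 : Real.sqrt T = L / m := by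
      rw [hT, Real.sqrt_sq (by positivity)]
    have : m * Real.sqrt t ≤ m * (L / m) := by
      refine mul_le_mul_of_nonneg_left ?_ hm0.le
      rw [← h2]; exact h1
    rw [mul_div_cancel₀ _ hm0.ne'] at this
    linarith
  have key3 : ∫⁻ t in Ioc (0:ℝ) T, ENNReal.ofReal (L - m * Real.sqrt t)
      = ENNReal.ofReal (∫ t in Ioc (0:ℝ) T, (L - m * Real.sqrt t)) :=
    (ofReal_integral_eq_lintegral_ofReal hsq_int hsq_nn).symm
  have key4 : ∫ t in Ioc (0:ℝ) T, (L - m * Real.sqrt t) = L ^ 3 / (3 * m ^ 2) := by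
    rw [← intervalIntegral.integral_of_le hT0.le]
    have hs : ∫ t in (0:ℝ)..T, Real.sqrt t = 2 / 3 * T ^ ((3:ℝ)/2) := by
      have : ∀ t : ℝ, Real.sqrt t = t ^ ((1:ℝ)/2) := fun t => Real.sqrt_eq_rpow t
      rw [intervalIntegral.integral_congr (fun t _ => this t)]
      rw [integral_rpow (Or.inl (by norm_num))]
      rw [Real.zero_rpow (by norm_num)]
      norm_num
      ring
    rw [intervalIntegral.integral_sub intervalIntegrable_const
      (IntervalIntegrable.const_mul ?_ m)]
    · rw [intervalIntegral.integral_const_mul, hs,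
        intervalIntegral.integral_const]
      have hTv : T ^ ((3:ℝ)/2) = (L / m) ^ 3 := by
        rw [hT, ← Real.rpow_natCast (L/m) 2, ← Real.rpow_mul (by positivity),
          ← Real.rpow_natCast (L/m) 3]
        norm_num
      rw [hTv, hT]
      clear_value T L m
      have hmm : m ^ 2 * m⁻¹ ^ 2 = 1 := by rw [← mul_pow, mul_inv_cancel₀ hm0.ne', one_pow]
      field_simp
      linear_combination (3 * L ^ 3) * hmm
    · exact Real.continuous_sqrt.intervalIntegrable 0 T
  -- conclude
  have final : ENNReal.ofReal (L ^ 3 / (3 * m ^ 2))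
      ≤ ENNReal.ofReal (∫ x in Icc a b, nf γ x) := by
    rw [key1, ← key4, ← key3]
    exact key2
  have hpos : 0 ≤ ∫ x in Icc a b, nf γ x :=
    integral_nonneg_of_ae hnn
  exact (ENNReal.ofReal_le_ofReal_iff hpos).mp final
section
variable (a b : ℝ) (n : ℕ)

noncomputable def Gam : Set ℝ :=
  (fun j : ℕ => a + (2 * (j : ℝ) - 1) * (b - a) / (2 * (n : ℝ) - 1)) '' Set.Icc 1 n

lemma Gam_finite : (Gam a b n).Finite := (Set.finite_Icc 1 n).image _

lemma Gam_mem {j : ℕ} (h1 : 1 ≤ j) (h2 : j ≤ n) :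
    a + (2 * (j : ℝ) - 1) * ((b - a) / (2 * (n : ℝ) - 1)) ∈ Gam a b n := by
  refine ⟨j, ⟨h1, h2⟩, ?_⟩
  ring

end

lemma upper_integral (a b : ℝ) (hab : a < b) (n : ℕ) (hn : 1 ≤ n) :
    ∫ x in a..b, nf (Gam a b n) x = (b - a) ^ 3 / (3 * (2 * (n : ℝ) - 1) ^ 2) := by
  have hn1 : (1:ℝ) ≤ (n:ℝ) := by exact_mod_cast hn
  set m : ℝ := 2 * (n:ℝ) - 1 with hm
  have hm0 : (0:ℝ) < m := by linarith
  set h : ℝ := (b - a) / m with hh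
  have h0 : (0:ℝ) < h := by
    apply div_pos (by linarith) hm0
  -- the points
  set c : ℕ → ℝ := fun i => a + (2 * (i:ℝ) - 1) * h with hc
  have hGam : Gam a b n = c '' Set.Icc 1 n := by
    unfold Gam
    apply Set.image_congr
    intro j _
    rw [hc, hh]
    ring
  have hfin : (Gam a b n).Finite := Gam_finite a b n
  have hne : (Gam a b n).Nonempty := ⟨_, Gam_mem a b n le_rfl hn⟩
  -- partition points
  set p : ℕ → ℝ := fun j => a + (min (2 * j) (2 * n - 1) : ℕ) * h with hp
  have hp0 : p 0 = a := by simp [hp]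
  have hpn : p n = b := by
    have : min (2 * n) (2 * n - 1) = 2 * n - 1 := by omega
    simp only [hp, this]
    have : ((2 * n - 1 : ℕ) : ℝ) = m := by
      rw [hm]; push_cast [Nat.cast_sub (by omega : 1 ≤ 2 * n)]; ring
    rw [this, hh]
    field_simp
    ring
  have hplt : ∀ j, j < n → p j = a + 2 * (j:ℝ) * h := by
    intro j hj
    have : min (2 * j) (2 * n - 1) = 2 * j := by omega
    simp only [hp, this]
    push_cast
    ring
  have hmono : ∀ j, j ≤ n → ∀ k, k ≤ j → p k ≤ p j := by
    intro j _ k hk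
    simp only [hp]
    have : (min (2 * k) (2 * n - 1) : ℕ) ≤ (min (2 * j) (2 * n - 1) : ℕ) := by omega
    have : ((min (2 * k) (2 * n - 1) : ℕ) : ℝ) ≤ ((min (2 * j) (2 * n - 1) : ℕ) : ℝ) := by
      exact_mod_cast this
    nlinarith
  -- pointwise value on each cell
  have hcell : ∀ j, j < n → ∀ x ∈ Set.Icc (p j) (p (j+1)), nf (Gam a b n) x = (x - c (j+1)) ^ 2 := by
    intro j hj x hx
    have hxl : a + 2 * (j:ℝ) * h ≤ x := by rw [← hplt j hj]; exact hx.1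
    have hxr : x ≤ a + (2 * (j:ℝ) + 2) * h := by
      refine hx.2.trans ?_
      simp only [hp]
      have h1 : (min (2 * (j+1)) (2 * n - 1) : ℕ) ≤ 2 * (j + 1) := min_le_left _ _
      have h1' : ((min (2 * (j+1)) (2 * n - 1) : ℕ) : ℝ) ≤ 2 * ((j:ℝ) + 1) := by
        calc ((min (2 * (j+1)) (2 * n - 1) : ℕ) : ℝ) ≤ ((2 * (j+1) : ℕ) : ℝ) := by exact_mod_cast h1
          _ = 2 * ((j:ℝ) + 1) := by push_cast; ring
      nlinarith
    apply le_antisymm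
    · have hmem : c (j+1) ∈ Gam a b n := by
        rw [hGam]
        exact ⟨j+1, ⟨by omega, by omega⟩, rfl⟩
      exact nf_le hfin hmem x
    · apply le_csInf (hne.image _)
      rintro y ⟨z, hz, rfl⟩
      rw [hGam] at hz
      obtain ⟨i, ⟨hi1, hi2⟩, rfl⟩ := hz
      -- show (x - c (j+1))^2 ≤ (x - c i)^2
      rcases lt_trichotomy i (j + 1) with hij | hij | hij
      · have hi : (i:ℝ) ≤ (j:ℝ) := by exact_mod_cast Nat.lt_succ_iff.mp hij
        simp only [hc]
        push_cast
        have hv : h ≤ x - (a + (2*(i:ℝ)-1)*h) := by nlinarith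
        have hu1 : x - (a + (2*((j:ℝ)+1)-1)*h) ≤ h := by ring_nf; ring_nf at hxr; linarith
        have hu2 : -h ≤ x - (a + (2*((j:ℝ)+1)-1)*h) := by ring_nf; ring_nf at hxl; linarith
        nlinarith [mul_nonneg (by linarith : (0:ℝ) ≤ (x - (a+(2*(i:ℝ)-1)*h)) - (x - (a+(2*((j:ℝ)+1)-1)*h))) (by linarith : (0:ℝ) ≤ (x - (a+(2*(i:ℝ)-1)*h)) + (x - (a+(2*((j:ℝ)+1)-1)*h)))]
      · rw [hij]
      · have hi : (j:ℝ) + 2 ≤ (i:ℝ) := by exact_mod_cast hij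
        simp only [hc]
        push_cast
        have hw : h ≤ (a + (2*(i:ℝ)-1)*h) - x := by nlinarith
        have hu1 : x - (a + (2*((j:ℝ)+1)-1)*h) ≤ h := by ring_nf; ring_nf at hxr; linarith
        have hu2 : -h ≤ x - (a + (2*((j:ℝ)+1)-1)*h) := by ring_nf; ring_nf at hxl; linarith
        nlinarith [mul_nonneg (by linarith : (0:ℝ) ≤ ((a + (2*(i:ℝ)-1)*h) - x) - (x - (a+(2*((j:ℝ)+1)-1)*h))) (by linarith : (0:ℝ) ≤ ((a + (2*(i:ℝ)-1)*h) - x) + (x - (a+(2*((j:ℝ)+1)-1)*h)))]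
  -- sum of integrals over cells
  have hint : ∀ k, k < n → IntervalIntegrable (nf (Gam a b n)) volume (p k) (p (k+1)) :=
    fun k _ => (nf_continuous hfin hne).intervalIntegrable _ _
  have hsum := intervalIntegral.sum_integral_adjacent_intervals hint
  rw [hp0, hpn] at hsum
  rw [← hsum]
  -- compute each cell integral
  have hcellint : ∀ j, j < n → ∫ x in p j..p (j+1), nf (Gam a b n) x
      = ((p (j+1) - c (j+1)) ^ 3 - (p j - c (j+1)) ^ 3) / 3 := by
    intro j hj
    have hle : p j ≤ p (j+1) := hmono (j+1) (by omega) j (by omega)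
    rw [intervalIntegral.integral_congr (g := fun x => (x - c (j+1))^2) ?_]
    · have := intervalIntegral.integral_comp_sub_right (a := p j) (b := p (j+1))
        (fun x => x ^ 2) (c (j+1))
      rw [this, integral_pow]
      norm_num
    · intro x hx
      rw [Set.uIcc_of_le hle] at hx
      exact hcell j hj x hx
  -- values
  have hval : ∀ j, j < n - 1 → ∫ x in p j..p (j+1), nf (Gam a b n) x = 2 * h ^ 3 / 3 := by
    intro j hj
    rw [hcellint j (by omega), hplt j (by omega), hplt (j+1) (by omega)]
    simp only [hc]
    push_cast
    ring
  have hlast : ∫ x in p (n-1)..p n, nf (Gam a b n) x = h ^ 3 / 3 := by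
    have hci := hcellint (n-1) (by omega)
    rw [show n - 1 + 1 = n by omega] at hci
    rw [hci, hplt (n-1) (by omega), hpn]
    have hb' : b = a + (2 * (n:ℝ) - 1) * h := by
      rw [hh]; field_simp
      rw [hm]; ring
    have hcn : c n = a + (2 * (n:ℝ) - 1) * h := by simp [hc]
    have hn1' : ((n - 1 : ℕ) : ℝ) = (n:ℝ) - 1 := by
      push_cast [Nat.cast_sub hn]; ring
    rw [hb', hcn, hn1']
    ring
  -- assemble
  have hsplit : ∑ k ∈ Finset.range n, ∫ x in p k..p (k+1), nf (Gam a b n) x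
      = (∑ k ∈ Finset.range (n-1), ∫ x in p k..p (k+1), nf (Gam a b n) x)
        + ∫ x in p (n-1)..p n, nf (Gam a b n) x := by
    obtain ⟨k, hk⟩ : ∃ k, n = k + 1 := ⟨n-1, (Nat.succ_pred_eq_of_pos hn).symm⟩
    rw [hk]
    simp only [Nat.add_sub_cancel]
    exact Finset.sum_range_succ _ k
  rw [hsplit]
  have : ∀ j ∈ Finset.range (n-1), ∫ x in p j..p (j+1), nf (Gam a b n) x = 2 * h ^ 3 / 3 := by
    intro j hj
    exact hval j (Finset.mem_range.mp hj)
  rw [Finset.sum_congr rfl this, hlast, Finset.sum_const, Finset.card_range]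
  have hn1' : ((n - 1 : ℕ) : ℝ) = (n:ℝ) - 1 := by
    push_cast [Nat.cast_sub hn]; ring
  rw [nsmul_eq_mul, hn1']
  have hba : b - a = m * h := by rw [hh]; field_simp
  rw [hba, hm]
  field_simp
  ring

/-- Conditional quantization for the uniform distribution on `[a,b]` with conditional set `{b}`:
the error is `(b-a)²/(3(2n-1)²)`, attained by `{a + (2j-1)(b-a)/(2n-1) : 1 ≤ j ≤ n}`. -/
theorem stmt4 (a b : ℝ) (hab : a < b) (n : ℕ) (hn : 1 ≤ n) :
    condQuantError (uniformOn a b) {b} n = (b - a) ^ 2 / (3 * (2 * (n : ℝ) - 1) ^ 2)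
    ∧ distortion (uniformOn a b)
        ((fun j : ℕ => a + (2 * (j : ℝ) - 1) * (b - a) / (2 * (n : ℝ) - 1)) '' Set.Icc 1 n)
      = (b - a) ^ 2 / (3 * (2 * (n : ℝ) - 1) ^ 2) := by
  have hn1 : (1:ℝ) ≤ (n:ℝ) := by exact_mod_cast hn
  have hm0 : (0:ℝ) < 2 * (n:ℝ) - 1 := by linarith
  have hL0 : (0:ℝ) < b - a := by linarith
  set V : ℝ := (b - a) ^ 2 / (3 * (2 * (n : ℝ) - 1) ^ 2) with hV
  -- distortion of the explicit set
  have hGamEq : distortion (uniformOn a b) (Gam a b n) = V := by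
    rw [distortion_eq a b hab, upper_integral a b hab n hn, hV]
    field_simp
  have hsecond : distortion (uniformOn a b)
      ((fun j : ℕ => a + (2 * (j : ℝ) - 1) * (b - a) / (2 * (n : ℝ) - 1)) '' Set.Icc 1 n) = V :=
    hGamEq
  refine ⟨?_, hsecond⟩
  -- b is in Gam
  have hbGam : b ∈ Gam a b n := by
    refine ⟨n, ⟨hn, le_rfl⟩, ?_⟩
    field_simp
    ring
  -- the set over which we take the infimum
  set S : Set ℝ := { v : ℝ | ∃ α : Set ℝ, α.Finite ∧ α.ncard ≤ n - ({b} : Set ℝ).ncard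
    ∧ v = distortion (uniformOn a b) (α ∪ {b}) } with hS
  -- membership : V ∈ S
  have hmemS : V ∈ S := by
    refine ⟨(fun j : ℕ => a + (2 * (j : ℝ) - 1) * (b - a) / (2 * (n : ℝ) - 1)) '' Set.Icc 1 (n-1),
      (Set.finite_Icc _ _).image _, ?_, ?_⟩
    · rw [Set.ncard_singleton]
      refine (Set.ncard_image_le (Set.finite_Icc _ _)).trans ?_
      rw [Set.ncard_eq_toFinset_card' (Set.Icc 1 (n-1))]
      simp
    · have hun : ((fun j : ℕ => a + (2 * (j : ℝ) - 1) * (b - a) / (2 * (n : ℝ) - 1)) ''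
          Set.Icc 1 (n-1)) ∪ {b} = Gam a b n := by
        have hsplit : Set.Icc 1 n = Set.Icc 1 (n-1) ∪ {n} := by
          ext j; simp only [Set.mem_Icc, Set.mem_union, Set.mem_singleton_iff]; omega
        unfold Gam
        rw [hsplit, Set.image_union, Set.image_singleton]
        congr 1
        have : a + (2 * (n : ℝ) - 1) * (b - a) / (2 * (n : ℝ) - 1) = b := by field_simp; ring
        rw [this]
      rw [hun, hGamEq]
  -- lower bound for every element of S
  have hlb : ∀ v ∈ S, V ≤ v := by
    rintro v ⟨α, hαfin, hαcard, rfl⟩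
    set γ : Set ℝ := α ∪ {b} with hγ
    have hγfin : γ.Finite := hαfin.union (Set.finite_singleton b)
    have hbγ : b ∈ γ := Or.inr rfl
    have hγcard : γ.ncard ≤ n := by
      refine (Set.ncard_union_le α {b}).trans ?_
      rw [Set.ncard_singleton] at hαcard ⊢
      omega
    have hint := integral_lower a b hab n hn γ hγfin hbγ hγcard
    rw [distortion_eq a b hab]
    have h1 : ∫ x in a..b, nf γ x = ∫ x in Set.Icc a b, nf γ x := by
      rw [intervalIntegral.integral_of_le hab.le, ← integral_Icc_eq_integral_Ioc]
    rw [h1, hV]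
    calc (b - a) ^ 2 / (3 * (2 * (n : ℝ) - 1) ^ 2)
        = (b-a)⁻¹ * ((b - a) ^ 3 / (3 * (2 * (n : ℝ) - 1) ^ 2)) := by
          field_simp
      _ ≤ (b-a)⁻¹ * ∫ x in Set.Icc a b, nf γ x := by
          exact mul_le_mul_of_nonneg_left hint (by positivity)
  -- conclude
  show sInf S = V
  exact le_antisymm (csInf_le ⟨V, fun v hv => hlb v hv⟩ hmemS) (le_csInf ⟨V, hmemS⟩ hlb)
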